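/- Let K ≥ 1, n ≥ K+1 be integers and s ∈ [0,1]. Under the random pruning-edge model, the expectation of |Z| equals the sum over v = K+1, …, n of (1-s)^{(v-K-1)(n-v+1)}. -/

import Mathlib

open MeasureTheory

/-- Potential pruning edges: pairs `(u,w)` with `1 ≤ u` and `u + K < w ≤ n`. -/
abbrev EdgeIdx (K n : ℕ) : Type :=
  {p : Fin (n + 1) × Fin (n + 1) // 1 ≤ (p.1 : ℕ) ∧ (p.1 : ℕ) + K < (p.2 : ℕ)}

/-- The pruning edge `e` covers the vertex `v` if `u + K < v ≤ w`. -/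
def covers {K n : ℕ} (e : EdgeIdx K n) (v : ℕ) : Prop :=
  (e.1.1 : ℕ) + K < v ∧ v ≤ (e.1.2 : ℕ)

instance {K n : ℕ} (e : EdgeIdx K n) (v : ℕ) : Decidable (covers e v) := by
  unfold covers; infer_instance

/-- The set `Z(ω)` of vertices `v ∈ {K+1, …, n}` covered by no present pruning edge. -/
def Zset (K n : ℕ) (ω : EdgeIdx K n → Bool) : Finset ℕ :=
  (Finset.Icc (K + 1) n).filter fun v => ∀ e : EdgeIdx K n, ω e = true → ¬ covers e v

/-- The product probability measure on outcomes `ω : EdgeIdx K n → Bool`, where each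
potential pruning edge is independently present with probability `s` (for `s ∈ [0,1]`;
the parameter is clamped to `[0,1]`, which is the identity for such `s`). -/
noncomputable def prunMeasure (K n : ℕ) (s : ℝ) : Measure (EdgeIdx K n → Bool) :=
  Measure.pi fun _ =>
    (PMF.bernoulli (min (Real.toNNReal s) 1) (min_le_right _ _)).toMeasure

lemma card_covers (K n v : ℕ) (hv : K + 1 ≤ v) (hvn : v ≤ n) :
    (Finset.univ.filter fun e : EdgeIdx K n => covers e v).card
      = (v - K - 1) * (n - v + 1) := by
  have h := Finset.card_bij'
    (s := Finset.univ.filter fun e : EdgeIdx K n => covers e v)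
    (t := (Finset.Icc 1 (v - K - 1)) ×ˢ (Finset.Icc v n))
    (fun e _ => ((e.1.1 : ℕ), (e.1.2 : ℕ)))
    (fun p hp => ⟨(⟨p.1, by
        simp only [Finset.mem_product, Finset.mem_Icc] at hp; omega⟩,
      ⟨p.2, by
        simp only [Finset.mem_product, Finset.mem_Icc] at hp; omega⟩), by
        simp only [Finset.mem_product, Finset.mem_Icc] at hp
        constructor <;> simp <;> omega⟩)
    (by
      intro e he
      rw [Finset.mem_filter] at he
      simp only [Finset.mem_filter, Finset.mem_univ, true_and, covers] at he
      have h1 := e.2.1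
      simp only [Finset.mem_product, Finset.mem_Icc]
      omega)
    (by
      intro p hp
      rw [Finset.mem_filter]
      simp [covers]
      simp only [Finset.mem_product, Finset.mem_Icc] at hp
      omega)
    (by intro e he; ext <;> simp)
    (by intro p hp; simp)
  rw [h, Finset.card_product, Nat.card_Icc, Nat.card_Icc]
  have : v - K - 1 + 1 - 1 = v - K - 1 := by omega
  rw [this]
  congr 1
  omega

lemma measure_uncovered (K n : ℕ) (s : ℝ) (hs0 : 0 ≤ s) (hs1 : s ≤ 1) (v : ℕ) :
    prunMeasure K n s {ω | ∀ e : EdgeIdx K n, ω e = true → ¬ covers e v}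
      = (ENNReal.ofReal (1 - s)) ^
          (Finset.univ.filter fun e : EdgeIdx K n => covers e v).card := by
  have hmin : min (Real.toNNReal s) 1 = Real.toNNReal s :=
    min_eq_left (Real.toNNReal_le_one.mpr hs1)
  have hofs : ENNReal.ofReal (1 - s) = 1 - ENNReal.ofReal s := by
    rw [ENNReal.ofReal_sub _ hs0, ENNReal.ofReal_one]
  set t : EdgeIdx K n → Set Bool := fun e => if covers e v then {false} else Set.univ with ht
  have hset : {ω : EdgeIdx K n → Bool | ∀ e : EdgeIdx K n, ω e = true → ¬ covers e v}
      = Set.univ.pi t := by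
    ext ω
    simp only [Set.mem_setOf_eq, Set.mem_pi, Set.mem_univ, true_implies, ht]
    constructor
    · intro h e
      by_cases hc : covers e v
      · simp only [if_pos hc, Set.mem_singleton_iff]
        cases hw : ω e
        · rfl
        · exact absurd hc (h e hw)
      · simp [if_neg hc]
    · intro h e hw hc
      have := h e
      rw [if_pos hc, Set.mem_singleton_iff] at this
      rw [hw] at this
      exact Bool.noConfusion this
  rw [hset]
  unfold prunMeasure
  rw [Measure.pi_pi]
  have hfac : ∀ e : EdgeIdx K n,
      (PMF.bernoulli (min (Real.toNNReal s) 1) (min_le_right _ _)).toMeasure (t e)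
        = if covers e v then ENNReal.ofReal (1 - s) else 1 := by
    intro e
    by_cases hc : covers e v
    · simp only [ht, if_pos hc]
      rw [PMF.toMeasure_apply_singleton _ _ (measurableSet_singleton _),
        PMF.bernoulli_apply]
      simp [hmin, hofs]
      rfl
    · simp only [ht, if_neg hc]
      exact measure_univ
  simp only [hfac]
  rw [Finset.prod_ite, Finset.prod_const, Finset.prod_const, one_pow, mul_one]

theorem stmt2 (K n : ℕ) (hK : 1 ≤ K) (hn : K + 1 ≤ n)
    (s : ℝ) (hs0 : 0 ≤ s) (hs1 : s ≤ 1) :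
    ∫ ω, ((Zset K n ω).card : ℝ) ∂(prunMeasure K n s)
      = ∑ v ∈ Finset.Icc (K + 1) n, (1 - s) ^ ((v - K - 1) * (n - v + 1)) := by
  haveI : IsProbabilityMeasure (prunMeasure K n s) := by
    unfold prunMeasure; infer_instance
  have hA : ∀ v : ℕ, MeasurableSet
      {ω : EdgeIdx K n → Bool | ∀ e : EdgeIdx K n, ω e = true → ¬ covers e v} :=
    fun v => (Set.toFinite _).measurableSet
  have hfun : ∀ ω : EdgeIdx K n → Bool, ((Zset K n ω).card : ℝ)
      = ∑ v ∈ Finset.Icc (K + 1) n,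
          Set.indicator {ω : EdgeIdx K n → Bool |
            ∀ e : EdgeIdx K n, ω e = true → ¬ covers e v} 1 ω := by
    intro ω
    rw [Zset, Finset.card_filter]
    push_cast
    refine Finset.sum_congr rfl fun v _ => ?_
    rw [Set.indicator_apply]
    simp [Set.mem_setOf_eq]
  simp only [hfun]
  rw [integral_finset_sum (Finset.Icc (K + 1) n)
    (f := fun v ω => Set.indicator {ω : EdgeIdx K n → Bool |
      ∀ e : EdgeIdx K n, ω e = true → ¬ covers e v} 1 ω)
    (fun v _ => (integrable_const (1:ℝ)).indicator (hA v))]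
  refine Finset.sum_congr rfl fun v hv => ?_
  rw [integral_indicator_one (hA v), measureReal_def, measure_uncovered K n s hs0 hs1 v,
    card_covers K n v (Finset.mem_Icc.mp hv).1 (Finset.mem_Icc.mp hv).2,
    ENNReal.toReal_pow, ENNReal.toReal_ofReal (by linarith)]
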